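/- Let β ≥ 0, u ∈ 𝒮(ℝ²), 0 < λ < 1, γ > 0, ω ∈ ℝ, and u_λ(x) = λ^ω u(λ^γ x). Then ‖u_λ‖_{Ḣ^{11/4}(ln H)^{-β}} ≤ 2 λ^ω λ^{(7/4)γ} (1 + 2|ln(λ^γ)|)^β ‖u‖_{Ḣ^{11/4}(ln H)^{-β}}. -/

import Mathlib

open MeasureTheory FourierTransform RealInnerProductSpace Module

lemma fourier_scale_aux (f : EuclideanSpace ℝ (Fin 2) → ℂ) {c : ℝ} (hc : 0 < c)
    (ξ : EuclideanSpace ℝ (Fin 2)) :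
    FourierTransform.fourier (fun x => f (c • x)) ξ
      = ((c ^ 2 : ℝ))⁻¹ • FourierTransform.fourier f (c⁻¹ • ξ) := by
  rw [Real.fourier_eq, Real.fourier_eq]
  have h1 : (fun x : EuclideanSpace ℝ (Fin 2) => (𝐞 (-⟪x, ξ⟫) : Circle) • f (c • x))
      = fun x => (fun y : EuclideanSpace ℝ (Fin 2) => (𝐞 (-⟪y, c⁻¹ • ξ⟫) : Circle) • f y)
          (c • x) := by
    funext x
    simp only [real_inner_smul_left, real_inner_smul_right]
    rw [← mul_assoc, inv_mul_cancel₀ hc.ne', one_mul]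
  rw [h1, Measure.integral_comp_smul volume
    (fun y : EuclideanSpace ℝ (Fin 2) => (𝐞 (-⟪y, c⁻¹ • ξ⟫) : Circle) • f y) c]
  have h2 : finrank ℝ (EuclideanSpace ℝ (Fin 2)) = 2 := finrank_euclideanSpace_fin
  rw [h2, abs_of_nonneg (by positivity)]

lemma fourier_rsmul_aux (f : EuclideanSpace ℝ (Fin 2) → ℂ) (r : ℝ)
    (ξ : EuclideanSpace ℝ (Fin 2)) :
    FourierTransform.fourier (fun x => r • f x) ξ = r • FourierTransform.fourier f ξ := by
  rw [Real.fourier_eq, Real.fourier_eq, ← integral_smul]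
  congr 1; funext x; rw [smul_comm]

lemma log_ineq_aux {c : ℝ} (t : ℝ) (hc : 0 < c) (ht : 0 ≤ t) :
    1 + |Real.log t| ≤ (1 + 2 * |Real.log c|) * (1 + |Real.log (c * t)|) := by
  rcases eq_or_lt_of_le ht with h | h
  · rw [← h, mul_zero, Real.log_zero]
    simp only [abs_zero]
    nlinarith [abs_nonneg (Real.log c)]
  · have hlog : Real.log (c * t) = Real.log c + Real.log t := Real.log_mul hc.ne' h.ne'
    have h1 : |Real.log t| ≤ |Real.log c| + |Real.log (c * t)| := by
      rw [hlog]; have := abs_add_le (-Real.log c) (Real.log c + Real.log t)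
      simpa using this
    nlinarith [abs_nonneg (Real.log c), abs_nonneg (Real.log (c * t)), abs_nonneg (Real.log t)]

lemma prod_bound_aux {M a n : ℝ} (ha : 0 ≤ a) (hn : 0 ≤ n) (hnM : n ≤ M) :
    (a + 1) * n ^ 2 ≤ M * (a * n) + M * n := by
  nlinarith [mul_nonneg (mul_nonneg (sub_nonneg.2 hnM) hn) ha,
    mul_nonneg (sub_nonneg.2 hnM) hn]

set_option maxHeartbeats 1000000 in
/-- Scaling of the logarithmically modified `Ḣ^{11/4}(ln H)^{-β}` norm:
`‖u_λ‖ ≤ 2 λ^ω λ^{(7/4)γ} (1 + 2|ln λ^γ|)^β ‖u‖`. -/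
theorem logSobolev_scaling
    (β : ℝ) (hβ : 0 ≤ β)
    (u : SchwartzMap (EuclideanSpace ℝ (Fin 2)) ℂ)
    (l ω γ : ℝ) (hl0 : 0 < l) (hl1 : l < 1) (hγ : 0 < γ) :
    Real.sqrt (∫ ξ : EuclideanSpace ℝ (Fin 2),
        ‖ξ‖ ^ (2 * (11 / 4 : ℝ)) / (1 + |Real.log ‖ξ‖|) ^ (2 * β) *
        ‖FourierTransform.fourier (fun x => (l ^ ω : ℝ) • u (l ^ γ • x)) ξ‖ ^ 2) ≤
      2 * l ^ ω * l ^ ((7 / 4) * γ) * (1 + 2 * |Real.log (l ^ γ)|) ^ β *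
        Real.sqrt (∫ ξ : EuclideanSpace ℝ (Fin 2),
          ‖ξ‖ ^ (2 * (11 / 4 : ℝ)) / (1 + |Real.log ‖ξ‖|) ^ (2 * β) *
          ‖FourierTransform.fourier (fun x => u x) ξ‖ ^ 2) := by
  have hc : (0:ℝ) < l ^ γ := Real.rpow_pos_of_pos hl0 γ
  set c : ℝ := l ^ γ with hcdef
  have hr : (0:ℝ) < l ^ ω := Real.rpow_pos_of_pos hl0 ω
  set r : ℝ := l ^ ω with hrdef
  set v : SchwartzMap (EuclideanSpace ℝ (Fin 2)) ℂ :=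
    SchwartzMap.fourierTransformCLM ℂ u with hvdef
  have hveq : ∀ ξ, FourierTransform.fourier (fun x => u x) ξ = v ξ := fun ξ => rfl
  set S : ℝ := 1 + 2 * |Real.log c| with hSdef
  have hS : 1 ≤ S := by have := abs_nonneg (Real.log c); simp only [hSdef]; linarith
  set P : ℝ := r * ((c ^ 2 : ℝ))⁻¹ with hPdef
  have hP : 0 < P := by positivity
  -- Fourier transform of the rescaled function
  have hFour : ∀ ξ, FourierTransform.fourier (fun x => r • u (c • x)) ξ = P • (v (c⁻¹ • ξ)) := by
    intro ξ
    rw [fourier_rsmul_aux (fun x => u (c • x)) r ξ, fourier_scale_aux (fun x => u x) hc ξ,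
      smul_smul, hveq]
  have hnorm : ∀ ξ : EuclideanSpace ℝ (Fin 2),
      ‖FourierTransform.fourier (fun x => r • u (c • x)) ξ‖ ^ 2 = P ^ 2 * ‖v (c⁻¹ • ξ)‖ ^ 2 := by
    intro ξ
    rw [hFour ξ, norm_smul, Real.norm_eq_abs, abs_of_pos hP, mul_pow]
  simp only [hveq, hnorm]
  set g2 : EuclideanSpace ℝ (Fin 2) → ℝ := fun ξ =>
    ‖ξ‖ ^ (2 * (11 / 4 : ℝ)) / (1 + |Real.log ‖ξ‖|) ^ (2 * β) * ‖v ξ‖ ^ 2 with hg2def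
  set F : EuclideanSpace ℝ (Fin 2) → ℝ := fun ξ =>
    ‖ξ‖ ^ (2 * (11 / 4 : ℝ)) / (1 + |Real.log ‖ξ‖|) ^ (2 * β) * (P ^ 2 * ‖v (c⁻¹ • ξ)‖ ^ 2)
    with hFdef
  have hFnonneg : ∀ ξ, 0 ≤ F ξ := by intro ξ; simp only [hFdef]; positivity
  have hg2nonneg : ∀ ξ, 0 ≤ g2 ξ := by intro ξ; simp only [hg2def]; positivity
  -- change of variables
  have hch : (∫ ξ, F ξ) = c ^ 2 * ∫ η, F (c • η) := by
    rw [Measure.integral_comp_smul volume F c]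
    have h2 : finrank ℝ (EuclideanSpace ℝ (Fin 2)) = 2 := finrank_euclideanSpace_fin
    rw [h2, abs_of_nonneg (by positivity), smul_eq_mul]
    field_simp
  -- pointwise bound
  set K : ℝ := P ^ 2 * c ^ (2 * (11 / 4 : ℝ)) * S ^ (2 * β) with hKdef
  have hpoint : ∀ η : EuclideanSpace ℝ (Fin 2), F (c • η) ≤ K * g2 η := by
    intro η
    have hsm : c⁻¹ • c • η = η := by rw [smul_smul, inv_mul_cancel₀ hc.ne', one_smul]
    have hnc : ‖c • η‖ = c * ‖η‖ := by rw [norm_smul, Real.norm_eq_abs, abs_of_pos hc]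
    simp only [hFdef, hg2def, hKdef, hsm, hnc]
    set t : ℝ := ‖η‖ with htdef
    have ht : 0 ≤ t := norm_nonneg _
    set w : ℝ := ‖v η‖ ^ 2 with hwdef
    have hw : 0 ≤ w := sq_nonneg _
    have hD' : (0:ℝ) < (1 + |Real.log (c * t)|) ^ (2 * β) := by positivity
    have hD : (0:ℝ) < (1 + |Real.log t|) ^ (2 * β) := by positivity
    have hDle : (1 + |Real.log t|) ^ (2 * β)
        ≤ S ^ (2 * β) * (1 + |Real.log (c * t)|) ^ (2 * β) := by
      rw [← Real.mul_rpow (by positivity) (by positivity)]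
      exact Real.rpow_le_rpow (by positivity) (log_ineq_aux t hc ht) (by positivity)
    have hmulr : (c * t) ^ (2 * (11 / 4 : ℝ))
        = c ^ (2 * (11 / 4 : ℝ)) * t ^ (2 * (11 / 4 : ℝ)) := Real.mul_rpow hc.le ht
    rw [hmulr]
    have key : t ^ (2 * (11 / 4 : ℝ)) / (1 + |Real.log (c * t)|) ^ (2 * β)
        ≤ S ^ (2 * β) * t ^ (2 * (11 / 4 : ℝ)) / (1 + |Real.log t|) ^ (2 * β) := by
      rw [div_le_div_iff₀ hD' hD]
      calc t ^ (2 * (11 / 4 : ℝ)) * (1 + |Real.log t|) ^ (2 * β)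
          ≤ t ^ (2 * (11 / 4 : ℝ)) * (S ^ (2 * β) * (1 + |Real.log (c * t)|) ^ (2 * β)) :=
            mul_le_mul_of_nonneg_left hDle (by positivity)
        _ = S ^ (2 * β) * t ^ (2 * (11 / 4 : ℝ)) * (1 + |Real.log (c * t)|) ^ (2 * β) := by
            ring
    calc c ^ (2 * (11 / 4 : ℝ)) * t ^ (2 * (11 / 4 : ℝ)) / (1 + |Real.log (c * t)|) ^ (2 * β)
          * (P ^ 2 * w)
        = (t ^ (2 * (11 / 4 : ℝ)) / (1 + |Real.log (c * t)|) ^ (2 * β))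
            * (c ^ (2 * (11 / 4 : ℝ)) * P ^ 2 * w) := by ring
      _ ≤ (S ^ (2 * β) * t ^ (2 * (11 / 4 : ℝ)) / (1 + |Real.log t|) ^ (2 * β))
            * (c ^ (2 * (11 / 4 : ℝ)) * P ^ 2 * w) :=
          mul_le_mul_of_nonneg_right key (by positivity)
      _ = P ^ 2 * c ^ (2 * (11 / 4 : ℝ)) * S ^ (2 * β)
            * (t ^ (2 * (11 / 4 : ℝ)) / (1 + |Real.log t|) ^ (2 * β) * w) := by ring
  -- integrability of the dominating function
  have hg2meas : AEStronglyMeasurable g2 volume := by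
    apply Measurable.aestronglyMeasurable
    apply Measurable.mul
    · apply Measurable.div
      · exact ((Real.continuous_rpow_const (by norm_num)).comp continuous_norm).measurable
      · have hrw : (fun ξ : EuclideanSpace ℝ (Fin 2) => (1 + |Real.log ‖ξ‖|) ^ (2 * β))
            = fun ξ => Real.exp (Real.log (1 + |Real.log ‖ξ‖|) * (2 * β)) :=
          funext fun ξ => Real.rpow_def_of_pos (by positivity) _
        rw [hrw]
        exact Real.measurable_exp.comp ((Real.measurable_log.comp
          ((Real.measurable_log.comp measurable_norm).abs.const_add 1)).mul_const _)
    · exact (v.continuous.norm.pow 2).measurable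
  set M : ℝ := (SchwartzMap.seminorm ℝ 0 0) v with hMdef
  have hM : ∀ x, ‖v x‖ ≤ M := fun x => v.norm_le_seminorm ℝ x
  have hg2bound : ∀ η, ‖g2 η‖ ≤ M * (‖η‖ ^ 6 * ‖v η‖) + M * ‖v η‖ := by
    intro η
    rw [Real.norm_eq_abs, abs_of_nonneg (hg2nonneg η)]
    have hD1 : (1:ℝ) ≤ (1 + |Real.log ‖η‖|) ^ (2 * β) :=
      Real.one_le_rpow (by have := abs_nonneg (Real.log ‖η‖); linarith) (by linarith)
    have h1 : g2 η ≤ ‖η‖ ^ (2 * (11 / 4 : ℝ)) * ‖v η‖ ^ 2 := by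
      simp only [hg2def]
      apply mul_le_mul_of_nonneg_right _ (sq_nonneg _)
      exact div_le_self (by positivity) hD1
    have h2 : ‖η‖ ^ (2 * (11 / 4 : ℝ)) ≤ ‖η‖ ^ 6 + 1 := by
      rcases le_total ‖η‖ 1 with h | h
      · have := Real.rpow_le_one (norm_nonneg η) h (by norm_num : (0:ℝ) ≤ 2 * (11/4))
        nlinarith [pow_nonneg (norm_nonneg η) 6]
      · have h3 : ‖η‖ ^ (2 * (11 / 4 : ℝ)) ≤ ‖η‖ ^ (6:ℝ) :=
          Real.rpow_le_rpow_of_exponent_le h (by norm_num)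
        rw [show ((6:ℝ)) = ((6:ℕ):ℝ) by norm_num, Real.rpow_natCast] at h3
        linarith
    calc g2 η ≤ ‖η‖ ^ (2 * (11 / 4 : ℝ)) * ‖v η‖ ^ 2 := h1
      _ ≤ (‖η‖ ^ 6 + 1) * ‖v η‖ ^ 2 :=
          mul_le_mul_of_nonneg_right h2 (sq_nonneg _)
      _ ≤ M * (‖η‖ ^ 6 * ‖v η‖) + M * ‖v η‖ :=
          prod_bound_aux (pow_nonneg (norm_nonneg η) 6) (norm_nonneg (v η)) (hM η)
  have hg2int : Integrable g2 volume := by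
    apply Integrable.mono' (((v.integrable_pow_mul volume 6).const_mul M).add
      (v.integrable.norm.const_mul M)) hg2meas
    exact ae_of_all _ hg2bound
  -- monotonicity of the integral
  have hmono : (∫ η, F (c • η)) ≤ K * ∫ ξ, g2 ξ := by
    rw [← integral_const_mul]
    exact integral_mono_of_nonneg (ae_of_all _ fun η => hFnonneg (c • η))
      (hg2int.const_mul K) (ae_of_all _ hpoint)
  have hint : (∫ ξ, F ξ) ≤ c ^ 2 * (K * ∫ ξ, g2 ξ) := by
    rw [hch]
    exact mul_le_mul_of_nonneg_left hmono (by positivity)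
  -- final algebra with square roots
  set Q : ℝ := r * c ^ ((7:ℝ)/4) * S ^ β with hQdef
  have hQpos : 0 < Q := by positivity
  have hck : c ^ 2 * K = Q ^ 2 := by
    have e1 : c ^ (2 * (11 / 4 : ℝ)) = c ^ ((7:ℝ)/2) * c ^ (2:ℕ) := by
      rw [← Real.rpow_natCast c 2, ← Real.rpow_add hc]; norm_num
    have e2 : (c ^ ((7:ℝ)/4)) ^ (2:ℕ) = c ^ ((7:ℝ)/2) := by
      rw [← Real.rpow_natCast (c ^ ((7:ℝ)/4)) 2, ← Real.rpow_mul hc.le]; norm_num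
    have e3 : (S ^ β) ^ (2:ℕ) = S ^ (2 * β) := by
      rw [← Real.rpow_natCast (S ^ β) 2, ← Real.rpow_mul (by linarith : (0:ℝ) ≤ S)]
      norm_num [mul_comm]
    simp only [hKdef, hQdef, hPdef, e1, mul_pow, e2, e3]
    field_simp
  have hQ2 : c ^ 2 * (K * ∫ ξ, g2 ξ) = Q ^ 2 * ∫ ξ, g2 ξ := by
    rw [← hck]; ring
  have hstep1 : Real.sqrt (∫ ξ, F ξ) ≤ Real.sqrt (Q ^ 2 * ∫ ξ, g2 ξ) := by
    apply Real.sqrt_le_sqrt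
    rw [← hQ2]; exact hint
  have hstep2 : Real.sqrt (Q ^ 2 * ∫ ξ, g2 ξ) = Q * Real.sqrt (∫ ξ, g2 ξ) := by
    rw [Real.sqrt_mul (sq_nonneg Q), Real.sqrt_sq hQpos.le]
  have e4 : l ^ ((7/4 : ℝ) * γ) = c ^ ((7:ℝ)/4) := by
    rw [hcdef, mul_comm, Real.rpow_mul hl0.le]
  calc Real.sqrt (∫ ξ, F ξ) ≤ Q * Real.sqrt (∫ ξ, g2 ξ) := by rw [← hstep2]; exact hstep1
    _ ≤ 2 * r * l ^ ((7/4 : ℝ) * γ) * S ^ β * Real.sqrt (∫ ξ, g2 ξ) := by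
        rw [e4, hQdef]
        have hnn : (0:ℝ) ≤ r * c ^ ((7:ℝ)/4) * S ^ β * Real.sqrt (∫ ξ, g2 ξ) := by positivity
        linarith [hnn]
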